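/- For 1 ≤ i < j ≤ m and i ≤ k < j, the action of the permutation s_{j-1} s_{j-2} ⋯ s_i (via the birational R-matrix S_m action) on x_k^{(r)} is given by s_{j-1}⋯s_i(x_k^{(r)}) = x_{k+1}^{(r+1)} σ_{(n-1)(k+1-i)}^{(r-k+i)}(x_i,...,x_{k+1}) σ_{(n-1)(k-i)}^{(r-k+i-1)}(x_i,...,x_k) / [σ_{(n-1)(k+1-i)}^{(r-k+i-1)}(x_i,...,x_{k+1}) σ_{(n-1)(k-i)}^{(r-k+i)}(x_i,...,x_k)], with upper indices mod n. -/

import Mathlib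

open Finset

noncomputable section BirationalR

/-- A vector of reals with cyclically indexed coordinates (upper index mod `n`). -/
abbrev Vec (n : ℕ) := ZMod n → ℝ

/-- `κ_r(a,b) = Σ_{j=r}^{r+n-1} (Π_{k=r+1}^{j} b_k)(Π_{k=j+1}^{r+n-1} a_k)`, indices mod `n`. -/
def kappaF (n : ℕ) (r : ZMod n) (a b : Vec n) : ℝ :=
  ∑ d ∈ Finset.range n,
    (∏ t ∈ Finset.range d, b (r + 1 + (t : ℕ))) *
      ∏ t ∈ Finset.range (n - 1 - d), a (r + 1 + (d : ℕ) + (t : ℕ))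

/-- First component `b'` of the birational R-matrix `η(a,b) = (b',a')`:
`b'_i = b_{i+1} κ_{i+1}(a,b)/κ_i(a,b)`. -/
def etaB (n : ℕ) (a b : Vec n) : Vec n :=
  fun i => b (i + 1) * kappaF n (i + 1) a b / kappaF n i a b

/-- Second component `a'` of `η(a,b) = (b',a')`: `a'_i = a_{i-1} κ_{i-1}(a,b)/κ_i(a,b)`. -/
def etaA (n : ℕ) (a b : Vec n) : Vec n :=
  fun i => a (i - 1) * kappaF n (i - 1) a b / kappaF n i a b

/-- `η` applied to positions `(p, p+1)` of a tuple of vectors. -/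
def etaAt (n : ℕ) (p : ℕ) (X : ℕ → Vec n) : ℕ → Vec n :=
  fun q => if q = p then etaB n (X p) (X (p + 1))
    else if q = p + 1 then etaA n (X p) (X (p + 1)) else X q

/-- Action of the word `s_{w₁} s_{w₂} ⋯ s_{wₗ}` (rightmost acts first). -/
def applyWord (n : ℕ) (w : List ℕ) (X : ℕ → Vec n) : ℕ → Vec n :=
  w.foldr (etaAt n) X

/-- The tuple `(x_i, x_{i+1}, …, x_j)` as a list. -/
def seg {n : ℕ} (x : ℕ → Vec n) (i j : ℕ) : List (Vec n) :=
  (List.range (j + 1 - i)).map fun t => x (i + t)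

/-- `τ_k^{(r)}(x_1,…,x_m)`: sum over weakly increasing `i_1 ≤ … ≤ i_k`, no index used
more than `n-1` times, of `x_{i_1}^{(r)} x_{i_2}^{(r-1)} ⋯ x_{i_k}^{(r-k+1)}`.
Encoded via multiplicity functions; `τ = 0` for negative `k`. -/
def tauF (n : ℕ) (r : ZMod n) (k : ℤ) (x : List (Vec n)) : ℝ :=
  if 0 ≤ k then
    ∑ c ∈ (Fintype.piFinset fun _ : Fin x.length => Finset.range n).filter
        (fun c => ∑ i, c i = k.toNat),
      ∏ i : Fin x.length, ∏ β ∈ Finset.range (c i),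
        x.get i (r - (∑ i' ∈ Finset.univ.filter (fun i' => i' < i), c i' : ℕ) - (β : ℕ))
  else 0

/-- `σ_k^{(r)}(x_1,…,x_m) = Σ_{t=0}^{k} x_1^{(r)} ⋯ x_1^{(r-t+1)} τ_{k-t}^{(r-t)}(x_2,…,x_m)`. -/
def sigmaF (n : ℕ) (r : ZMod n) (k : ℕ) : List (Vec n) → ℝ
  | [] => if k = 0 then 1 else 0
  | y :: rest =>
      ∑ t ∈ Finset.range (k + 1),
        (∏ β ∈ Finset.range t, y (r - (β : ℕ))) * tauF n (r - (t : ℕ)) ((k : ℤ) - (t : ℤ)) rest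

/-- `σ̄_k^{(r)}(x_1,…,x_m) = Σ_{t=0}^{k} τ_{k-t}^{(r)}(x_1,…,x_{m-1}) x_m^{(r-k+t)} ⋯ x_m^{(r-k+1)}`. -/
def sigmaBarF (n : ℕ) (r : ZMod n) (k : ℕ) : List (Vec n) → ℝ
  | [] => if k = 0 then 1 else 0
  | y :: rest =>
      ∑ t ∈ Finset.range (k + 1),
        tauF n r ((k : ℤ) - (t : ℤ)) ((y :: rest).dropLast) *
          ∏ β ∈ Finset.range t,
            (y :: rest).getLast (List.cons_ne_nil y rest) (r - (k : ℕ) + 1 + (β : ℕ))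

/-- `Ω_k^{(r)}(x_i,…,x_j) = Σ_{ℓ=0}^{n-1} σ^{(r)}_{(n-1)(k-i)+ℓ}(x_i,…,x_k)
σ̄^{(r+k-i-ℓ)}_{(n-1)(j-k)-ℓ}(x_{k+1},…,x_j)`. -/
def OmegaF (n : ℕ) (r : ZMod n) (k i j : ℕ) (x : ℕ → Vec n) : ℝ :=
  ∑ ℓ ∈ Finset.range n,
    sigmaF n r ((n - 1) * (k - i) + ℓ) (seg x i k) *
      sigmaBarF n (r + (k : ℕ) - (i : ℕ) - (ℓ : ℕ)) ((n - 1) * (j - k) - ℓ) (seg x (k + 1) j)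

/-- `P_k^{(r)}(x_i,…,x_j) = Σ_{t=0}^{k} (Π_{s=0}^{t-1} x_i^{(r-s)})
σ_{(n-1)(j-i-1)}^{(r-t)}(x_i,…,x_{j-1}) (Π_{s=0}^{k-t-1} x_j^{(r-t+j-i-1-s)})`. -/
def PF (n : ℕ) (r : ZMod n) (k i j : ℕ) (x : ℕ → Vec n) : ℝ :=
  ∑ t ∈ Finset.range (k + 1),
    (∏ s ∈ Finset.range t, x i (r - (s : ℕ))) *
      sigmaF n (r - (t : ℕ)) ((n - 1) * (j - i - 1)) (seg x i (j - 1)) *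
      ∏ s ∈ Finset.range (k - t), x j (r - (t : ℕ) + (j : ℕ) - (i : ℕ) - 1 - (s : ℕ))

end BirationalR

noncomputable section Aux

open Finset

variable {n : ℕ}

/-- `tauF` with an explicit length and vector-valued function. -/
def tauAux (n : ℕ) (r : ZMod n) (k : ℤ) (L : ℕ) (v : Fin L → Vec n) : ℝ :=
  if 0 ≤ k then
    ∑ c ∈ (Fintype.piFinset fun _ : Fin L => Finset.range n).filter
        (fun c => ∑ i, c i = k.toNat),
      ∏ i : Fin L, ∏ β ∈ Finset.range (c i),
        v i (r - (∑ i' ∈ Finset.univ.filter (fun i' => i' < i), c i' : ℕ) - (β : ℕ))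
  else 0

lemma tauF_eq_tauAux (r : ZMod n) (k : ℤ) (x : List (Vec n)) :
    tauF n r k x = tauAux n r k x.length x.get := rfl

lemma tauAux_congr (r : ZMod n) (k : ℤ) {L L' : ℕ} (h : L = L')
    (v : Fin L → Vec n) (v' : Fin L' → Vec n) (hv : ∀ i : Fin L, v i = v' (Fin.cast h i)) :
    tauAux n r k L v = tauAux n r k L' v' := by
  subst h
  have : v = v' := funext fun i => hv i
  rw [this]

lemma tau_neg (r : ZMod n) (k : ℤ) (hk : k < 0) (x : List (Vec n)) : tauF n r k x = 0 := by
  rw [tauF, if_neg (not_le.2 hk)]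

lemma tauAux_zero (hn : 0 < n) (r : ZMod n) (L : ℕ) (v : Fin L → Vec n) :
    tauAux n r 0 L v = 1 := by
  rw [tauAux, if_pos le_rfl]
  have hfil : ((Fintype.piFinset fun _ : Fin L => Finset.range n).filter
      (fun c => ∑ i, c i = (0:ℤ).toNat)) = {fun _ => 0} := by
    ext c
    simp only [Finset.mem_filter, Fintype.mem_piFinset, Finset.mem_range,
      Finset.mem_singleton, Int.toNat_zero, Finset.sum_eq_zero_iff, Finset.mem_univ,
      true_implies]
    constructor
    · rintro ⟨-, h2⟩
      exact funext fun i => h2 i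
    · rintro rfl
      exact ⟨fun i => hn, fun i => rfl⟩
  rw [hfil, Finset.sum_singleton]
  simp

lemma tau_zero (hn : 0 < n) (r : ZMod n) (x : List (Vec n)) : tauF n r 0 x = 1 := by
  rw [tauF_eq_tauAux, tauAux_zero hn]

lemma tauAux_nonneg (r : ZMod n) (k : ℤ) (L : ℕ) (v : Fin L → Vec n)
    (hv : ∀ i s, 0 < v i s) : 0 ≤ tauAux n r k L v := by
  rw [tauAux]
  split
  · exact Finset.sum_nonneg fun c _ => Finset.prod_nonneg fun i _ =>
      Finset.prod_nonneg fun β _ => (hv i _).le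
  · exact le_rfl

lemma tau_nonneg (r : ZMod n) (k : ℤ) (x : List (Vec n))
    (hx : ∀ v ∈ x, ∀ s, 0 < v s) : 0 ≤ tauF n r k x := by
  rw [tauF_eq_tauAux]
  exact tauAux_nonneg _ _ _ _ fun i s => hx _ (x.get_mem i) s

lemma tau_too_big (hn : 0 < n) (r : ZMod n) (k : ℤ) (x : List (Vec n))
    (hk : ((n:ℤ) - 1) * x.length < k) : tauF n r k x = 0 := by
  have hnn : (0:ℤ) ≤ ((n:ℤ) - 1) * x.length := by
    apply mul_nonneg <;> omega
  have hk0 : (0:ℤ) ≤ k := le_of_lt (lt_of_le_of_lt hnn hk)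
  rw [tauF, if_pos hk0]
  apply Finset.sum_eq_zero
  intro c hc
  exfalso
  rw [Finset.mem_filter, Fintype.mem_piFinset] at hc
  obtain ⟨h1, h2⟩ := hc
  have hle : ∑ i, c i ≤ ∑ _i : Fin x.length, (n - 1) :=
    Finset.sum_le_sum fun i _ => Nat.le_sub_one_of_lt (Finset.mem_range.1 (h1 i))
  rw [h2] at hle
  simp only [Finset.sum_const, Finset.card_univ, Fintype.card_fin, smul_eq_mul] at hle
  have h3 : (k.toNat : ℤ) ≤ ((x.length * (n-1) : ℕ) : ℤ) := by exact_mod_cast hle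
  have h4 : ((x.length * (n - 1) : ℕ) : ℤ) = (x.length : ℤ) * ((n:ℤ) - 1) := by
    push_cast [Nat.cast_sub hn]; ring
  have h5 : ((n:ℤ)-1) * (x.length:ℤ) = (x.length:ℤ) * ((n:ℤ)-1) := mul_comm _ _
  omega

end Aux
noncomputable section Aux2

open Finset

variable {n : ℕ}

lemma seg_length (x : ℕ → Vec n) (i j : ℕ) : (seg x i j).length = j + 1 - i := by
  simp [seg]

lemma seg_cons (x : ℕ → Vec n) {i j : ℕ} (h : i ≤ j) :
    seg x i j = x i :: seg x (i+1) j := by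
  have h1 : j + 1 - i = (j + 1 - (i+1)) + 1 := by omega
  rw [seg, seg, h1, List.range_succ_eq_map, List.map_cons, List.map_map]
  refine congrArg₂ _ (by rw [add_zero]) ?_
  apply List.map_congr_left
  intro t _
  show x (i + (t+1)) = x (i + 1 + t)
  have h2 : i + (t+1) = i + 1 + t := by omega
  rw [h2]

lemma seg_concat (x : ℕ → Vec n) {i j : ℕ} (h : i ≤ j + 1) :
    seg x i (j+1) = seg x i j ++ [x (j+1)] := by
  have h1 : j + 1 + 1 - i = (j + 1 - i) + 1 := by omega
  rw [seg, seg, h1, List.range_succ, List.map_append, List.map_singleton]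
  have h2 : i + (j + 1 - i) = j + 1 := by omega
  rw [h2]

lemma seg_single (x : ℕ → Vec n) (i : ℕ) : seg x i i = [x i] := by
  simp [seg, List.range_succ]

lemma mem_seg {x : ℕ → Vec n} {i j : ℕ} {v : Vec n} (hv : v ∈ seg x i j) :
    ∃ p, v = x p := by
  rw [seg] at hv
  obtain ⟨t, -, rfl⟩ := List.mem_map.1 hv
  exact ⟨i + t, rfl⟩

lemma sigma_pos (hn : 0 < n) (r : ZMod n) (K : ℕ) (y : Vec n) (rest : List (Vec n))
    (hy : ∀ s, 0 < y s) (hrest : ∀ v ∈ rest, ∀ s, 0 < v s) :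
    0 < sigmaF n r K (y :: rest) := by
  rw [sigmaF]
  apply Finset.sum_pos'
  · intro t _
    apply mul_nonneg
    · exact Finset.prod_nonneg fun β _ => (hy _).le
    · exact tau_nonneg _ _ _ hrest
  · refine ⟨K, Finset.self_mem_range_succ K, ?_⟩
    have : (K:ℤ) - (K:ℤ) = 0 := by ring
    rw [this, tau_zero hn, mul_one]
    exact Finset.prod_pos fun β _ => hy _

lemma kappa_pos (hn : 0 < n) (r : ZMod n) (a b : Vec n)
    (ha : ∀ s, 0 < a s) (hb : ∀ s, 0 < b s) : 0 < kappaF n r a b := by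
  rw [kappaF]
  apply Finset.sum_pos
  · intro d _
    exact mul_pos (Finset.prod_pos fun t _ => hb _) (Finset.prod_pos fun t _ => ha _)
  · exact ⟨0, Finset.mem_range.2 hn⟩

lemma etaA_pos (hn : 0 < n) (a b : Vec n) (ha : ∀ s, 0 < a s) (hb : ∀ s, 0 < b s) :
    ∀ s, 0 < etaA n a b s := by
  intro s
  rw [etaA]
  exact div_pos (mul_pos (ha _) (kappa_pos hn _ _ _ ha hb)) (kappa_pos hn _ _ _ ha hb)

/-- The chain `z_i = x_i`, `z_{p+1} = η_A(z_p, x_{p+1})`, indexed by offset `q = p - i`. -/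
def Zchain (n : ℕ) (X : ℕ → Vec n) (i : ℕ) : ℕ → Vec n
  | 0 => X i
  | q + 1 => etaA n (Zchain n X i q) (X (i + q + 1))

lemma Zchain_pos (hn : 0 < n) (X : ℕ → Vec n) (i : ℕ) (hX : ∀ p s, 0 < X p s) (q : ℕ) :
    ∀ s, 0 < Zchain n X i q s := by
  induction q with
  | zero => exact hX i
  | succ q ih => exact etaA_pos hn _ _ ih (hX _)

end Aux2
noncomputable section Aux3

variable {n : ℕ}

/-- State of the tuple after applying `s_{i+q-1} ⋯ s_{i+1} s_i`. -/
def Wfun (n : ℕ) (X : ℕ → Vec n) (i q : ℕ) : ℕ → Vec n := fun p =>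
  if p < i then X p
  else if p < i + q then etaB n (Zchain n X i (p - i)) (X (p+1))
  else if p = i + q then Zchain n X i q
  else X p

lemma Wfun_small (X : ℕ → Vec n) {i q p : ℕ} (h : p < i) : Wfun n X i q p = X p := by
  rw [Wfun, if_pos h]

lemma Wfun_mid (X : ℕ → Vec n) {i q p : ℕ} (h1 : i ≤ p) (h2 : p < i + q) :
    Wfun n X i q p = etaB n (Zchain n X i (p - i)) (X (p+1)) := by
  rw [Wfun, if_neg (by omega), if_pos h2]

lemma Wfun_top (X : ℕ → Vec n) {i q : ℕ} : Wfun n X i q (i + q) = Zchain n X i q := by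
  rw [Wfun, if_neg (by omega), if_neg (by omega), if_pos rfl]

lemma Wfun_gt (X : ℕ → Vec n) {i q p : ℕ} (h : i + q < p) : Wfun n X i q p = X p := by
  rw [Wfun, if_neg (by omega), if_neg (by omega), if_neg (by omega)]

lemma applyWord_eq_Wfun (X : ℕ → Vec n) (i q : ℕ) :
    applyWord n (List.range' i q).reverse X = Wfun n X i q := by
  induction q with
  | zero =>
    funext p
    simp only [List.range'_zero, List.reverse_nil, applyWord, List.foldr_nil]
    rcases lt_trichotomy p i with h | h | h
    · rw [Wfun_small X h]
    · subst h
      rw [(by omega : p = p + 0)]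
      rw [Wfun_top X, Zchain]
    · rw [Wfun_gt X (by omega)]
  | succ q ih =>
    have hrange : (List.range' i (q+1)).reverse = (i+q) :: (List.range' i q).reverse := by
      rw [List.range'_concat, List.reverse_append, List.reverse_singleton,
        List.singleton_append, one_mul]
    rw [applyWord, hrange, List.foldr_cons]
    have hW : List.foldr (etaAt n) X (List.range' i q).reverse = Wfun n X i q := ih
    rw [hW]
    funext p
    rw [etaAt]
    rcases eq_or_ne p (i+q) with hp | hp
    · subst hp
      rw [if_pos rfl, Wfun_top X, Wfun_gt X (by omega),
        Wfun_mid X (by omega) (by omega : i + q < i + (q+1))]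
      have h2 : i + q - i = q := by omega
      rw [h2]
    · rw [if_neg hp]
      rcases eq_or_ne p (i+q+1) with hp2 | hp2
      · subst hp2
        rw [if_pos rfl, Wfun_top X, Wfun_gt X (by omega)]
        rw [(by omega : i + q + 1 = i + (q+1)), Wfun_top X, Zchain,
          (by omega : i + (q + 1) = i + q + 1)]
      · rw [if_neg hp2]
        rcases lt_trichotomy p i with h | h | h
        · rw [Wfun_small X h, Wfun_small X h]
        · subst h
          have hq : 0 < q := by omega
          rw [Wfun_mid X le_rfl (by omega), Wfun_mid X le_rfl (by omega)]
        · rcases lt_or_ge p (i+q) with h2 | h2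
          · rw [Wfun_mid X (by omega) h2, Wfun_mid X (by omega) (by omega)]
          · rw [Wfun_gt X (by omega), Wfun_gt X (by omega)]

lemma applyWord_apply (X : ℕ → Vec n) {i q k : ℕ} (hik : i ≤ k) (hk : k < i + q) :
    applyWord n (List.range' i q).reverse X k = etaB n (Zchain n X i (k - i)) (X (k+1)) := by
  rw [applyWord_eq_Wfun, Wfun_mid X hik hk]

end Aux3
noncomputable section Aux4

open Finset

variable {n : ℕ}

lemma tauAux_neg (r : ZMod n) (k : ℤ) (hk : k < 0) (L : ℕ) (v : Fin L → Vec n) :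
    tauAux n r k L v = 0 := by
  rw [tauAux, if_neg (not_le.2 hk)]

lemma filter_lt_castSucc {L : ℕ} (i : Fin L) :
    Finset.univ.filter (fun i' : Fin (L+1) => i' < Fin.castSucc i)
      = (Finset.univ.filter (fun i' : Fin L => i' < i)).map Fin.castSuccEmb := by
  ext a
  simp only [Finset.mem_filter, Finset.mem_univ, true_and, Finset.mem_map,
    Fin.lt_def, Fin.coe_castSucc, Fin.castSuccEmb_apply]
  constructor
  · intro h
    have ha : a.val < L := by have := i.isLt; omega
    exact ⟨⟨a.val, ha⟩, h, by simp [Fin.ext_iff]⟩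
  · rintro ⟨b, hb, rfl⟩
    simpa using hb

lemma filter_lt_last {L : ℕ} :
    Finset.univ.filter (fun i' : Fin (L+1) => i' < Fin.last L)
      = Finset.univ.map (Fin.castSuccEmb (n := L)) := by
  ext a
  simp only [Finset.mem_filter, Finset.mem_univ, true_and, Finset.mem_map,
    Fin.lt_def, Fin.val_last, Fin.castSuccEmb_apply]
  constructor
  · intro h
    exact ⟨⟨a.val, h⟩, by simp [Fin.ext_iff]⟩
  · rintro ⟨b, -, rfl⟩
    simpa using b.isLt

lemma sum_filter_lt_castSucc {L : ℕ} (c : Fin (L+1) → ℕ) (i : Fin L) :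
    ∑ i' ∈ Finset.univ.filter (fun i' => i' < Fin.castSucc i), c i'
      = ∑ i' ∈ Finset.univ.filter (fun i' => i' < i), c (Fin.castSucc i') := by
  rw [filter_lt_castSucc, Finset.sum_map]
  exact Finset.sum_congr rfl fun x _ => by congr 1

lemma sum_filter_lt_last {L : ℕ} (c : Fin (L+1) → ℕ) :
    ∑ i' ∈ Finset.univ.filter (fun i' => i' < Fin.last L), c i'
      = ∑ i : Fin L, c (Fin.castSucc i) := by
  rw [filter_lt_last, Finset.sum_map]
  exact Finset.sum_congr rfl fun x _ => by congr 1

lemma tauAux_split_last (r : ZMod n) (K : ℕ) (L : ℕ) (v : Fin L → Vec n) (w : Vec n) :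
    tauAux n r (K:ℤ) (L+1) (Fin.snoc v w) =
      ∑ d ∈ Finset.range n,
        (∏ β ∈ Finset.range d, w (r - ((K - d : ℕ) : ZMod n) - (β : ℕ))) *
          tauAux n r ((K:ℤ) - (d:ℤ)) L v := by
  rw [tauAux, if_pos (Int.natCast_nonneg K), Int.toNat_natCast]
  have hmaps : ∀ c ∈ (Fintype.piFinset fun _ : Fin (L+1) => Finset.range n).filter
      (fun c => ∑ i, c i = K), c (Fin.last L) ∈ Finset.range n := by
    intro c hc
    rw [Finset.mem_filter, Fintype.mem_piFinset] at hc
    exact hc.1 _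
  rw [← Finset.sum_fiberwise_of_maps_to hmaps]
  apply Finset.sum_congr rfl
  intro d hd
  rw [Finset.mem_range] at hd
  by_cases hdK : d ≤ K
  · rw [tauAux, if_pos (by omega : (0:ℤ) ≤ (K:ℤ) - d)]
    have htN2 : ((K:ℤ) - d).toNat = K - d := by omega
    rw [htN2, Finset.mul_sum]
    refine Finset.sum_nbij' (i := fun c => c ∘ Fin.castSucc) (j := fun c' => Fin.snoc c' d)
      ?_ ?_ ?_ ?_ ?_
    · intro c hc
      beta_reduce
      rw [Finset.mem_filter] at hc
      obtain ⟨hc1, hc2⟩ := hc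
      rw [Finset.mem_filter, Fintype.mem_piFinset] at hc1
      rw [Finset.mem_filter, Fintype.mem_piFinset]
      refine ⟨fun i => hc1.1 _, ?_⟩
      have hsum : ∑ i : Fin (L+1), c i = (∑ i : Fin L, c (Fin.castSucc i)) + c (Fin.last L) :=
        Fin.sum_univ_castSucc c
      rw [hc1.2, hc2] at hsum
      simp only [Function.comp_apply]
      omega
    · intro c' hc'
      beta_reduce
      rw [Finset.mem_filter, Fintype.mem_piFinset] at hc'
      rw [Finset.mem_filter]
      constructor
      · rw [Finset.mem_filter, Fintype.mem_piFinset]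
        constructor
        · intro i
          refine Fin.lastCases ?_ ?_ i
          · rw [Fin.snoc_last]
            exact Finset.mem_range.2 hd
          · intro j
            rw [Fin.snoc_castSucc]
            exact hc'.1 _
        · rw [Fin.sum_univ_castSucc]
          simp only [Fin.snoc_castSucc, Fin.snoc_last]
          rw [hc'.2]
          omega
      · rw [Fin.snoc_last]
    · intro c hc
      beta_reduce
      rw [Finset.mem_filter] at hc
      have hinit : c ∘ Fin.castSucc = Fin.init c := rfl
      rw [hinit, ← hc.2]
      exact Fin.snoc_init_self c
    · intro c' hc'
      beta_reduce
      funext i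
      simp [Fin.snoc_castSucc]
    · intro c hc
      beta_reduce
      rw [Finset.mem_filter] at hc
      obtain ⟨hc1, hc2⟩ := hc
      rw [Finset.mem_filter, Fintype.mem_piFinset] at hc1
      rw [Fin.prod_univ_castSucc, mul_comm]
      have hlast : ∑ i : Fin L, c (Fin.castSucc i) = K - d := by
        have hsum : ∑ i : Fin (L+1), c i = (∑ i : Fin L, c (Fin.castSucc i)) + c (Fin.last L) :=
          Fin.sum_univ_castSucc c
        rw [hc1.2, hc2] at hsum
        omega
      congr 1
      · rw [Fin.snoc_last, hc2, sum_filter_lt_last, hlast]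
      · apply Finset.prod_congr rfl
        intro i _
        simp only [Function.comp_apply]
        rw [Fin.snoc_castSucc, sum_filter_lt_castSucc]
  · have hempty : ((Fintype.piFinset fun _ : Fin (L+1) => Finset.range n).filter
        (fun c => ∑ i, c i = K)).filter (fun c => c (Fin.last L) = d) = ∅ := by
      rw [Finset.filter_eq_empty_iff]
      intro c hc
      rw [Finset.mem_filter] at hc
      have hle : c (Fin.last L) ≤ ∑ i, c i :=
        Finset.single_le_sum (f := fun i => c i) (fun i _ => Nat.zero_le _) (Finset.mem_univ _)
      rw [hc.2] at hle
      omega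
    rw [hempty, Finset.sum_empty, tauAux_neg _ _ (by omega : (K:ℤ) - (d:ℤ) < 0), mul_zero]

end Aux4
noncomputable section Aux5

open Finset

variable {n : ℕ}

lemma get_append_singleton (u : List (Vec n)) (w : Vec n) (i : Fin (u ++ [w]).length) :
    (u ++ [w]).get i
      = Fin.snoc (α := fun _ => Vec n) u.get w
          (Fin.cast (by simp : (u ++ [w]).length = u.length + 1) i) := by
  rcases Nat.lt_or_ge i.val u.length with hv | hv
  · have hcast : Fin.cast (by simp : (u ++ [w]).length = u.length + 1) i
        = Fin.castSucc ⟨i.val, hv⟩ := by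
      simp [Fin.ext_iff]
    rw [hcast, Fin.snoc_castSucc]
    simp only [List.get_eq_getElem]
    exact List.getElem_append_left hv
  · have hlen : i.val < u.length + 1 := by have := i.isLt; simpa using this
    have hi : i.val = u.length := by omega
    have hcast : Fin.cast (by simp : (u ++ [w]).length = u.length + 1) i
        = Fin.last u.length := by
      simp [Fin.ext_iff, hi]
    rw [hcast, Fin.snoc_last]
    simp only [List.get_eq_getElem]
    rw [List.getElem_append_right hv]
    simp [hi]

lemma tau_split_last (r : ZMod n) (K : ℕ) (u : List (Vec n)) (w : Vec n) :
    tauF n r (K:ℤ) (u ++ [w]) =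
      ∑ d ∈ Finset.range n,
        (∏ β ∈ Finset.range d, w (r - ((K - d : ℕ) : ZMod n) - (β : ℕ))) *
          tauF n r ((K:ℤ) - (d:ℤ)) u := by
  rw [tauF_eq_tauAux]
  have h1 : tauAux n r (K:ℤ) (u ++ [w]).length (u ++ [w]).get
      = tauAux n r (K:ℤ) (u.length + 1) (Fin.snoc u.get w) := by
    apply tauAux_congr r (K:ℤ) (by simp) _ _
    intro i
    exact get_append_singleton u w i
  rw [h1, tauAux_split_last]
  apply Finset.sum_congr rfl
  intro d _
  rw [tauF_eq_tauAux]

end Aux5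
noncomputable section Aux6

open Finset

variable {n : ℕ}

lemma sum_range_eq_shift (G : ℕ → ℝ) (a b c : ℕ) (hcb : c + b ≤ a)
    (h0 : ∀ t, t < c → G t = 0) (h1 : ∀ t, c + b < t → G t = 0) :
    ∑ t ∈ Finset.range (a+1), G t = ∑ s ∈ Finset.range (b+1), G (s + c) := by
  have hinj : ∀ x ∈ Finset.range (b+1), ∀ y ∈ Finset.range (b+1),
      x + c = y + c → x = y := by intros; omega
  have himg : ∑ x ∈ (Finset.range (b+1)).image (fun s => s + c), G x
      = ∑ s ∈ Finset.range (b+1), G (s + c) := Finset.sum_image hinj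
  rw [← himg]
  apply (Finset.sum_subset ?_ ?_).symm
  · intro t ht
    rw [Finset.mem_image] at ht
    obtain ⟨s, hs, rfl⟩ := ht
    rw [Finset.mem_range] at hs ⊢
    omega
  · intro t ht hnt
    rw [Finset.mem_range] at ht
    rw [Finset.mem_image] at hnt
    by_cases h : t < c
    · exact h0 t h
    · refine h1 t ?_
      by_contra hc
      push_neg at hc
      exact hnt ⟨t - c, Finset.mem_range.2 (by omega), by omega⟩

lemma sigma_append (hn : 2 ≤ n) (ρ : ZMod n) (x₀ w : Vec n) (u : List (Vec n)) :
    sigmaF n ρ ((n-1) * (u.length+1)) (x₀ :: (u ++ [w])) =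
      ∑ d ∈ Finset.range n,
        ((∏ t ∈ Finset.range d, w (ρ + (u.length : ℕ) + 2 + (t:ℕ))) *
          ∏ t ∈ Finset.range (n-1-d), x₀ (ρ + 2 + (d:ℕ) + (t:ℕ))) *
          sigmaF n (ρ + 1 + (d:ℕ)) ((n-1) * u.length) (x₀ :: u) := by
  have hn0 : ((n:ℕ) : ZMod n) = 0 := ZMod.natCast_self n
  set Lu := u.length with hLu
  set A := (n-1) * (Lu+1) with hA
  set B := (n-1) * Lu with hB
  have hAB : A = B + (n-1) := by rw [hA, hB]; ring
  have hABn : A + Lu + 1 = n * (Lu + 1) := by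
    have h2 : (n-1) * (Lu+1) + (Lu+1) = n * (Lu+1) := by
      rw [← add_one_mul]
      congr 1
      omega
    omega
  -- Step 1: expand and split off the last variable of the tau's.
  have step1 : sigmaF n ρ A (x₀ :: (u ++ [w])) =
      ∑ t ∈ Finset.range (A+1), ∑ d ∈ Finset.range n,
        (∏ β ∈ Finset.range t, x₀ (ρ - (β:ℕ))) *
          ((∏ t' ∈ Finset.range d, w (ρ + (Lu:ℕ) + 2 + (t':ℕ))) *
            tauF n (ρ - (t:ℕ)) ((A:ℤ) - (t:ℤ) - (d:ℤ)) u) := by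
    rw [sigmaF]
    apply Finset.sum_congr rfl
    intro t ht
    rw [Finset.mem_range] at ht
    have hcast : ((A:ℤ) - (t:ℤ)) = ((A - t : ℕ) : ℤ) := by omega
    rw [hcast, tau_split_last, Finset.mul_sum]
    apply Finset.sum_congr rfl
    intro d hd
    rw [Finset.mem_range] at hd
    congr 1
    have hτ : ((A - t : ℕ) : ℤ) - (d:ℤ) = (A:ℤ) - t - d := by omega
    rw [hτ]
    by_cases hdt : (A:ℤ) - t - d < 0
    · rw [tau_neg _ _ hdt, mul_zero, mul_zero]
    · congr 1
      have hdA : t + d ≤ A := by omega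
      rw [show (∏ t' ∈ Finset.range d, w (ρ + (Lu:ℕ) + 2 + (t':ℕ)))
          = ∏ β ∈ Finset.range d, w (ρ + (Lu:ℕ) + 2 + ((d - 1 - β : ℕ):ZMod n))
          from (Finset.prod_range_reflect (fun t' => w (ρ + (Lu:ℕ) + 2 + (t':ℕ))) d).symm]
      apply Finset.prod_congr rfl
      intro β hβ
      rw [Finset.mem_range] at hβ
      apply congrArg w
      have key : (t + (A - t - d) + β) + (Lu + 2 + (d - 1 - β)) = A + Lu + 1 := by omega
      have key2 : ((t + (A - t - d) + β) + (Lu + 2 + (d - 1 - β)) : ℕ) = n * (Lu + 1) := by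
        omega
      have key3 := congrArg (Nat.cast : ℕ → ZMod n) key2
      push_cast at key3
      push_cast
      linear_combination -key3 - ((Lu:ZMod n) + 1) * hn0
  rw [step1, Finset.sum_comm]
  apply Finset.sum_congr rfl
  intro d hd
  rw [Finset.mem_range] at hd
  set c := n - 1 - d with hc
  -- Step 2: only `t`'s with `c ≤ t ≤ c + B` contribute.
  have step2 : ∑ t ∈ Finset.range (A+1),
      (∏ β ∈ Finset.range t, x₀ (ρ - (β:ℕ))) *
        ((∏ t' ∈ Finset.range d, w (ρ + (Lu:ℕ) + 2 + (t':ℕ))) *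
          tauF n (ρ - (t:ℕ)) ((A:ℤ) - (t:ℤ) - (d:ℤ)) u) =
      ∑ s ∈ Finset.range (B+1),
      (∏ β ∈ Finset.range (s+c), x₀ (ρ - (β:ℕ))) *
        ((∏ t' ∈ Finset.range d, w (ρ + (Lu:ℕ) + 2 + (t':ℕ))) *
          tauF n (ρ - ((s+c:ℕ):ZMod n)) ((A:ℤ) - ((s+c:ℕ):ℤ) - (d:ℤ)) u) := by
    apply sum_range_eq_shift _ A B c (by omega)
    · intro t htc
      rw [tau_too_big (by omega) _ _ u ?_, mul_zero, mul_zero]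
      have hBz : ((B:ℕ):ℤ) = ((n:ℤ) - 1) * (u.length:ℤ) := by
        rw [hB, hLu]
        push_cast [Nat.cast_sub (by omega : 1 ≤ n)]
        ring
      rw [← hLu, ← hBz]
      omega
    · intro t htc
      rw [tau_neg _ _ (by omega), mul_zero, mul_zero]
  rw [step2]
  -- Step 3: match with the right-hand side.
  rw [sigmaF, Finset.mul_sum]
  apply Finset.sum_congr rfl
  intro s hs
  rw [Finset.mem_range] at hs
  have hsplit : ∏ β ∈ Finset.range (s+c), x₀ (ρ - (β:ℕ))
      = (∏ β ∈ Finset.range c, x₀ (ρ - (β:ℕ)))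
        * ∏ β ∈ Finset.range s, x₀ (ρ - ((c + β : ℕ):ZMod n)) := by
    rw [add_comm s c, Finset.prod_range_add]
  rw [hsplit]
  -- explicit x₀ block
  have hx0 : ∏ t' ∈ Finset.range c, x₀ (ρ + 2 + (d:ℕ) + (t':ℕ))
      = ∏ β ∈ Finset.range c, x₀ (ρ - (β:ℕ)) := by
    rw [show (∏ t' ∈ Finset.range c, x₀ (ρ + 2 + (d:ℕ) + (t':ℕ)))
        = ∏ β ∈ Finset.range c, x₀ (ρ + 2 + (d:ℕ) + ((c - 1 - β : ℕ):ZMod n))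
        from (Finset.prod_range_reflect (fun t' => x₀ (ρ + 2 + (d:ℕ) + (t':ℕ))) c).symm]
    apply Finset.prod_congr rfl
    intro β hβ
    rw [Finset.mem_range] at hβ
    apply congrArg x₀
    have key2 : ((2 + d + (c - 1 - β)) + β : ℕ) = n := by omega
    have key3 := congrArg (Nat.cast : ℕ → ZMod n) key2
    push_cast at key3
    push_cast
    linear_combination key3 + hn0
  -- inner x₀ block
  have hx1 : ∀ β ∈ Finset.range s, x₀ (ρ - ((c + β : ℕ):ZMod n))
      = x₀ (ρ + 1 + (d:ℕ) - (β:ℕ)) := by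
    intro β hβ
    apply congrArg x₀
    have key2 : ((c + β) + (1 + d) : ℕ) = n + β := by omega
    have key3 := congrArg (Nat.cast : ℕ → ZMod n) key2
    push_cast at key3
    push_cast
    linear_combination -key3 - hn0
  rw [Finset.prod_congr rfl hx1]
  -- tau factor
  have hτ : tauF n (ρ - ((s+c:ℕ):ZMod n)) ((A:ℤ) - ((s+c:ℕ):ℤ) - (d:ℤ)) u
      = tauF n (ρ + 1 + (d:ℕ) - (s:ℕ)) (((B:ℕ):ℤ) - (s:ℤ)) u := by
    have harg : ((A:ℤ) - ((s+c:ℕ):ℤ) - (d:ℤ)) = ((B:ℕ):ℤ) - (s:ℤ) := by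
      push_cast
      omega
    have hshift : ρ - ((s+c:ℕ):ZMod n) = ρ + 1 + (d:ℕ) - (s:ℕ) := by
      have key2 : ((s + c) + (1 + d) : ℕ) = n + s := by omega
      have key3 := congrArg (Nat.cast : ℕ → ZMod n) key2
      push_cast at key3
      push_cast
      linear_combination -key3 - hn0
    rw [harg, hshift]
  rw [hτ, ← hx0]
  ring
end Aux6
noncomputable section Aux7

open Finset

variable {n : ℕ}

lemma sigma_seg_pos (hn : 0 < n) (X : ℕ → Vec n) (hX : ∀ p s, 0 < X p s)
    (r : ZMod n) (K : ℕ) {i j : ℕ} (hij : i ≤ j) : 0 < sigmaF n r K (seg X i j) := by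
  rw [seg_cons X hij]
  apply sigma_pos hn _ _ _ _ (hX i)
  intro v hv s
  obtain ⟨p, rfl⟩ := mem_seg hv
  exact hX p s

lemma prod_div_telescope (g : ℕ → ℝ) (f : ℕ → ℝ) (hf : ∀ u, f u ≠ 0) (M : ℕ) :
    ∏ t ∈ Finset.range M, (g t * (f t / f (t+1)))
      = (∏ t ∈ Finset.range M, g t) * (f 0 / f M) := by
  induction M with
  | zero => simp [div_self (hf 0)]
  | succ M ih =>
    rw [Finset.prod_range_succ, ih, Finset.prod_range_succ, mul_mul_mul_comm,
      div_mul_div_comm, mul_comm (f 0) (f M), mul_div_mul_left _ _ (hf M)]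

/-- The key invariant for `kappaF` along the `Zchain`, given the closed form of the chain. -/
lemma K_of_Z (hn : 2 ≤ n) (X : ℕ → Vec n) (hX : ∀ p s, 0 < X p s) (i q : ℕ)
    (hZ : ∀ r : ZMod n, Zchain n X i q r =
      X i (r - (q:ℕ)) * sigmaF n (r - (q:ℕ) - 1) ((n-1)*q) (seg X i (i+q)) /
        sigmaF n (r - (q:ℕ)) ((n-1)*q) (seg X i (i+q))) (r : ZMod n) :
    kappaF n r (Zchain n X i q) (X (i+q+1)) =
      sigmaF n (r - (q:ℕ) - 1) ((n-1)*(q+1)) (seg X i (i+q+1)) /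
        sigmaF n (r - (q:ℕ) - 1) ((n-1)*q) (seg X i (i+q)) := by
  have hn0 : ((n:ℕ) : ZMod n) = 0 := ZMod.natCast_self n
  set ρ : ZMod n := r - (q:ℕ) - 1 with hρ
  set F : ℕ → ℝ := fun u => sigmaF n (ρ + 1 + (u:ℕ)) ((n-1)*q) (seg X i (i+q)) with hF
  have hFpos : ∀ u, 0 < F u := fun u => sigma_seg_pos (by omega) X hX _ _ (by omega)
  have hFlast : F (n-1) = sigmaF n ρ ((n-1)*q) (seg X i (i+q)) := by
    rw [hF]
    apply congrArg (fun s => sigmaF n s ((n-1)*q) (seg X i (i+q)))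
    have h1 : ((1 + (n-1) : ℕ) : ZMod n) = 0 := by
      rw [(by omega : 1 + (n-1) = n), hn0]
    push_cast at h1
    linear_combination h1
  have hZpt : ∀ d t : ℕ, Zchain n X i q (r + 1 + (d:ℕ) + (t:ℕ))
      = X i (ρ + 2 + (d:ℕ) + (t:ℕ)) * (F (d + t) / F (d + (t + 1))) := by
    intro d t
    rw [hZ]
    have e2 : r + 1 + (d:ℕ) + (t:ℕ) - (q:ℕ) - 1 = ρ + 1 + ((d + t : ℕ):ZMod n) := by
      rw [hρ]; push_cast; ring
    have e3 : r + 1 + (d:ℕ) + (t:ℕ) - (q:ℕ) = ρ + 1 + ((d + (t + 1) : ℕ):ZMod n) := by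
      rw [hρ]; push_cast; ring
    rw [e2, e3, mul_div_assoc,
      show X i (ρ + 1 + ((d + (t + 1) : ℕ):ZMod n)) = X i (ρ + 2 + (d:ℕ) + (t:ℕ)) from
        congrArg (X i) (by push_cast; ring)]
  rw [kappaF]
  have hterm : ∀ d ∈ Finset.range n,
      (∏ t ∈ Finset.range d, X (i+q+1) (r + 1 + (t:ℕ))) *
        ∏ t ∈ Finset.range (n-1-d), Zchain n X i q (r + 1 + (d:ℕ) + (t:ℕ))
      = ((∏ t ∈ Finset.range d, X (i+q+1) (r + 1 + (t:ℕ))) *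
          ∏ t ∈ Finset.range (n-1-d), X i (ρ + 2 + (d:ℕ) + (t:ℕ))) * F d / F (n-1) := by
    intro d hd
    rw [Finset.mem_range] at hd
    have hprod : ∏ t ∈ Finset.range (n-1-d), Zchain n X i q (r + 1 + (d:ℕ) + (t:ℕ))
        = ∏ t ∈ Finset.range (n-1-d),
            (X i (ρ + 2 + (d:ℕ) + (t:ℕ)) * (F (d + t) / F (d + (t + 1)))) :=
      Finset.prod_congr rfl fun t _ => hZpt d t
    rw [hprod,
      prod_div_telescope (fun t => X i (ρ + 2 + (d:ℕ) + (t:ℕ))) (fun u => F (d + u))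
        (fun u => (hFpos (d+u)).ne') (n-1-d)]
    rw [(by omega : d + (n-1-d) = n-1), add_zero]
    ring
  rw [Finset.sum_congr rfl hterm, ← Finset.sum_div, hFlast]
  congr 1
  -- numerator: apply the sigma append identity
  have hlen : (seg X (i+1) (i+q)).length = q := by rw [seg_length]; omega
  have happ := sigma_append hn ρ (X i) (X (i+q+1)) (seg X (i+1) (i+q))
  rw [hlen] at happ
  have hylist : X i :: seg X (i+1) (i+q) = seg X i (i+q) := (seg_cons X (by omega)).symm
  have hfull : X i :: (seg X (i+1) (i+q) ++ [X (i+q+1)]) = seg X i (i+q+1) := by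
    rw [seg_cons X (by omega : i ≤ i+q+1), seg_concat X (by omega : i+1 ≤ i+q+1)]
  rw [hylist, hfull] at happ
  rw [happ]
  apply Finset.sum_congr rfl
  intro d hd
  have hw : ∀ t : ℕ, X (i+q+1) (ρ + (q:ℕ) + 2 + (t:ℕ)) = X (i+q+1) (r + 1 + (t:ℕ)) :=
    fun t => congrArg (X (i+q+1)) (by rw [hρ]; ring)
  rw [Finset.prod_congr rfl fun t _ => hw t]

/-- Closed form for the `Zchain`. -/
lemma Z_closed (hn : 2 ≤ n) (X : ℕ → Vec n) (hX : ∀ p s, 0 < X p s) (i q : ℕ) :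
    ∀ r : ZMod n, Zchain n X i q r =
      X i (r - (q:ℕ)) * sigmaF n (r - (q:ℕ) - 1) ((n-1)*q) (seg X i (i+q)) /
        sigmaF n (r - (q:ℕ)) ((n-1)*q) (seg X i (i+q)) := by
  induction q with
  | zero =>
    intro r
    rw [Zchain, (by omega : i + 0 = i), seg_single]
    simp only [Nat.cast_zero, Nat.mul_zero, sub_zero]
    have h1 : sigmaF n (r - 1) 0 [X i] = 1 := by
      rw [sigmaF]
      simp [tauF]
    have h0 : sigmaF n r 0 [X i] = 1 := by
      rw [sigmaF]
      simp [tauF]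
    rw [h1, h0]
    simp
  | succ q ih =>
    intro r
    have hK := K_of_Z hn X hX i q ih
    rw [Zchain, etaA, ih (r - 1), hK (r - 1), hK r]
    have e1 : r - 1 - (q:ℕ) = r - ((q+1 : ℕ):ZMod n) := by push_cast; ring
    have e2 : r - 1 - (q:ℕ) - 1 = r - ((q+1 : ℕ):ZMod n) - 1 := by push_cast; ring
    have e3 : r - (q:ℕ) - 1 = r - ((q+1 : ℕ):ZMod n) := by push_cast; ring
    rw [e2, e1, e3, (by omega : i + (q+1) = i + q + 1)]
    set R : ZMod n := r - ((q+1 : ℕ):ZMod n) with hR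
    set S1 := sigmaF n (R - 1) ((n-1)*q) (seg X i (i+q)) with hS1
    set S2 := sigmaF n R ((n-1)*q) (seg X i (i+q)) with hS2
    set T1 := sigmaF n (R - 1) ((n-1)*(q+1)) (seg X i (i+q+1)) with hT1
    set T2 := sigmaF n R ((n-1)*(q+1)) (seg X i (i+q+1)) with hT2
    have hS1p : 0 < S1 := sigma_seg_pos (by omega) X hX _ _ (by omega)
    have hS2p : 0 < S2 := sigma_seg_pos (by omega) X hX _ _ (by omega)
    have hT2p : 0 < T2 := sigma_seg_pos (by omega) X hX _ _ (by omega)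
    field_simp
end Aux7


/-- for `1 ≤ i < j ≤ m` and `i ≤ k < j`, the action of
`s_{j-1} s_{j-2} ⋯ s_i` on `x_k^{(r)}` is
`x_{k+1}^{(r+1)} σ_{(n-1)(k+1-i)}^{(r-k+i)}(x_i,…,x_{k+1}) σ_{(n-1)(k-i)}^{(r-k+i-1)}(x_i,…,x_k)
/ [σ_{(n-1)(k+1-i)}^{(r-k+i-1)}(x_i,…,x_{k+1}) σ_{(n-1)(k-i)}^{(r-k+i)}(x_i,…,x_k)]`. -/
theorem one_shift_formula (n : ℕ) (hn : 2 ≤ n) (m : ℕ) (X : ℕ → Vec n)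
    (hX : ∀ p r, 0 < X p r) (i j k : ℕ) (hi : 1 ≤ i) (hij : i < j) (hjm : j ≤ m)
    (hik : i ≤ k) (hkj : k < j) (r : ZMod n) :
    applyWord n (List.range' i (j - i)).reverse X k r =
      X (k + 1) (r + 1) *
          sigmaF n (r - (k : ℕ) + (i : ℕ)) ((n - 1) * (k + 1 - i)) (seg X i (k + 1)) *
          sigmaF n (r - (k : ℕ) + (i : ℕ) - 1) ((n - 1) * (k - i)) (seg X i k) /
        (sigmaF n (r - (k : ℕ) + (i : ℕ) - 1) ((n - 1) * (k + 1 - i)) (seg X i (k + 1)) *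
          sigmaF n (r - (k : ℕ) + (i : ℕ)) ((n - 1) * (k - i)) (seg X i k)) := by
  rw [applyWord_apply X hik (by omega : k < i + (j - i)), etaB]
  have hZc := Z_closed hn X hX i (k - i)
  have hK := K_of_Z hn X hX i (k - i) hZc
  rw [(by omega : i + (k - i) = k), (by omega : k + 1 = k + 1)] at hK
  -- `i + (k-i) + 1` should have become `k + 1` after the rewrite above
  have hK1 := hK (r + 1)
  have hK0 := hK r
  have hcast : ((k:ℕ) : ZMod n) = ((i:ℕ) : ZMod n) + (((k - i : ℕ)) : ZMod n) := by
    rw [← Nat.cast_add]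
    congr 1
    omega
  have e1 : r + 1 - ((k - i : ℕ) : ZMod n) - 1 = r - (k:ℕ) + (i:ℕ) := by
    rw [hcast]; ring
  have e2 : r - ((k - i : ℕ) : ZMod n) - 1 = r - (k:ℕ) + (i:ℕ) - 1 := by
    rw [hcast]; ring
  have edeg : (k - i) + 1 = k + 1 - i := by omega
  rw [e1, edeg] at hK1
  rw [e2, edeg] at hK0
  rw [hK1, hK0]
  set S1 := sigmaF n (r - (k:ℕ) + (i:ℕ)) ((n - 1) * (k + 1 - i)) (seg X i (k + 1)) with hS1
  set S2 := sigmaF n (r - (k:ℕ) + (i:ℕ)) ((n - 1) * (k - i)) (seg X i k) with hS2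
  set T1 := sigmaF n (r - (k:ℕ) + (i:ℕ) - 1) ((n - 1) * (k + 1 - i)) (seg X i (k + 1)) with hT1
  set T2 := sigmaF n (r - (k:ℕ) + (i:ℕ) - 1) ((n - 1) * (k - i)) (seg X i k) with hT2
  have hS1p : 0 < S1 := sigma_seg_pos (by omega) X hX _ _ (by omega)
  have hS2p : 0 < S2 := sigma_seg_pos (by omega) X hX _ _ (by omega)
  have hT1p : 0 < T1 := sigma_seg_pos (by omega) X hX _ _ (by omega)
  have hT2p : 0 < T2 := sigma_seg_pos (by omega) X hX _ _ (by omega)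
  field_simp
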